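/- Let λ_1, λ_2 ∈ ℂ and let z_1 ∈ H^3(0,ℓ_1), z_2 ∈ H^3(0,ℓ_2) be nonzero solutions of λ_i z_i + z_i' + z_i''' = 0 with z_i(0) = z_i'(0) = 0 and z_i(ℓ_i) = z_i'(ℓ_i) = 0 (i = 1,2). Then z_1''(0) ≠ 0 and z_2''(0) ≠ 0, and the N-tuple y = (z_2''(0) z_1, -z_1''(0) z_2, 0, ..., 0) is nonzero, each component solves its ODE with the same boundary conditions, and Σ_{i=1}^N y_i''(0) = 0. -/

import Mathlib

open scoped BigOperators
open MeasureTheory intervalIntegral Real Set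

set_option maxHeartbeats 1000000

private lemma iteratedDeriv_cmul {n : ℕ} (c : ℂ) {f : ℝ → ℂ} (hf : ContDiff ℝ n f) (x : ℝ) :
    iteratedDeriv n (fun t => c * f t) x = c * iteratedDeriv n f x := by
  have h1 : (fun t => c * f t) = c • f := by
    funext t; simp [smul_eq_mul]
  rw [h1, ← iteratedDerivWithin_univ, ← iteratedDerivWithin_univ]
  exact iteratedDerivWithin_const_smul (Set.mem_univ x) uniqueDiffOn_univ c hf.contDiffWithinAt

/-- A nonzero solution of the third-order ODE cannot have all of
`z 0`, `z' 0`, `z'' 0` vanish. -/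
private lemma zero_of_ode (ℓ : ℝ) (lam : ℂ) (z : ℝ → ℂ)
    (hz : ContDiff ℝ 3 z)
    (hode : ∀ x ∈ Set.Icc (0:ℝ) ℓ, lam * z x + deriv z x + iteratedDeriv 3 z x = 0)
    (h0 : z 0 = 0) (h1 : deriv z 0 = 0) (h2 : iteratedDeriv 2 z 0 = 0) :
    ∀ x ∈ Set.Icc (0:ℝ) ℓ, z x = 0 := by
  classical
  let E := ℂ × ℂ × ℂ
  let P1 : E →L[ℝ] ℂ := ContinuousLinearMap.fst ℝ ℂ (ℂ × ℂ)
  let P2 : E →L[ℝ] ℂ := (ContinuousLinearMap.fst ℝ ℂ ℂ).comp (ContinuousLinearMap.snd ℝ ℂ (ℂ × ℂ))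
  let P3 : E →L[ℝ] ℂ := (ContinuousLinearMap.snd ℝ ℂ ℂ).comp (ContinuousLinearMap.snd ℝ ℂ (ℂ × ℂ))
  let L : E →L[ℝ] E := P2.prod (P3.prod (-(lam • P1 + P2)))
  let f : ℝ → E := fun t => (z t, deriv z t, iteratedDeriv 2 z t)
  have hz0 : Differentiable ℝ z := hz.differentiable (by norm_num)
  have hz1 : Differentiable ℝ (deriv z) := by
    have := hz.differentiable_iteratedDeriv 1 (by norm_num)
    rwa [iteratedDeriv_one] at this
  have hz2 : Differentiable ℝ (iteratedDeriv 2 z) :=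
    hz.differentiable_iteratedDeriv 2 (by norm_num)
  have hderiv1 : ∀ t, deriv (deriv z) t = iteratedDeriv 2 z t := by
    intro t
    have := congrFun (iteratedDeriv_succ (n := 1) (f := z)) t
    rw [iteratedDeriv_one] at this
    exact this.symm
  have hderiv2 : ∀ t, deriv (iteratedDeriv 2 z) t = iteratedDeriv 3 z t := by
    intro t
    exact (congrFun (iteratedDeriv_succ (n := 2) (f := z)) t).symm
  have hfd : ∀ t, HasDerivAt f (deriv z t, iteratedDeriv 2 z t, iteratedDeriv 3 z t) t := by
    intro t
    have d1 : HasDerivAt z (deriv z t) t := (hz0 t).hasDerivAt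
    have d2 : HasDerivAt (deriv z) (iteratedDeriv 2 z t) t := by
      have := (hz1 t).hasDerivAt
      rwa [hderiv1 t] at this
    have d3 : HasDerivAt (iteratedDeriv 2 z) (iteratedDeriv 3 z t) t := by
      have := (hz2 t).hasDerivAt
      rwa [hderiv2 t] at this
    exact d1.prodMk (d2.prodMk d3)
  have hLf : ∀ t ∈ Set.Icc (0:ℝ) ℓ,
      L (f t) = (deriv z t, iteratedDeriv 2 z t, iteratedDeriv 3 z t) := by
    intro t ht
    have h3 : iteratedDeriv 3 z t = -(lam * z t + deriv z t) := by
      have := hode t ht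
      linear_combination this
    simp only [L, P1, P2, P3, f, ContinuousLinearMap.prod_apply, ContinuousLinearMap.coe_comp',
      Function.comp_apply, ContinuousLinearMap.coe_fst', ContinuousLinearMap.coe_snd',
      ContinuousLinearMap.neg_apply, ContinuousLinearMap.add_apply,
      ContinuousLinearMap.coe_smul', Pi.smul_apply, smul_eq_mul]
    exact congrArg _ (congrArg _ h3.symm)
  have hfc : ContinuousOn f (Set.Icc 0 ℓ) :=
    (Continuous.prodMk hz0.continuous
      (Continuous.prodMk hz1.continuous hz2.continuous)).continuousOn
  have key : Set.EqOn f (fun _ => (0:E)) (Set.Icc 0 ℓ) := by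
    apply ODE_solution_unique_of_mem_Icc_right
      (v := fun _ p => L p) (s := fun _ => Set.univ) (K := ‖L‖₊)
      (fun _ _ => L.lipschitz.lipschitzOnWith) hfc
    · intro t ht
      have := (hfd t).hasDerivWithinAt (s := Set.Ici t)
      rwa [← hLf t (Set.mem_Icc_of_Ico ht)] at this
    · intro t _; exact Set.mem_univ _
    · exact continuousOn_const
    · intro t ht
      have : L ((fun _ => (0:E)) t) = (0:E) := by simp
      rw [this]
      exact (hasDerivAt_const t (0:E)).hasDerivWithinAt
    · intro t _; exact Set.mem_univ _
    · simp only [f, h0, h1, h2]; rfl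
  intro x hx
  have := key hx
  exact congrArg Prod.fst this

theorem stmt12 (N : ℕ) (hN : 2 ≤ N) (ℓ : Fin N → ℝ) (hℓ : ∀ i, 0 < ℓ i)
    (lam₁ lam₂ : ℂ) (z₁ z₂ : ℝ → ℂ)
    (hz₁ : ContDiff ℝ 3 z₁) (hz₂ : ContDiff ℝ 3 z₂)
    (hz₁ne : ∃ x ∈ Set.Icc (0:ℝ) (ℓ ⟨0, by omega⟩), z₁ x ≠ 0)
    (hz₂ne : ∃ x ∈ Set.Icc (0:ℝ) (ℓ ⟨1, by omega⟩), z₂ x ≠ 0)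
    (hode₁ : ∀ x ∈ Set.Icc (0:ℝ) (ℓ ⟨0, by omega⟩),
      lam₁ * z₁ x + deriv z₁ x + iteratedDeriv 3 z₁ x = 0)
    (hode₂ : ∀ x ∈ Set.Icc (0:ℝ) (ℓ ⟨1, by omega⟩),
      lam₂ * z₂ x + deriv z₂ x + iteratedDeriv 3 z₂ x = 0)
    (hbc₁ : z₁ 0 = 0 ∧ deriv z₁ 0 = 0 ∧ z₁ (ℓ ⟨0, by omega⟩) = 0 ∧ deriv z₁ (ℓ ⟨0, by omega⟩) = 0)
    (hbc₂ : z₂ 0 = 0 ∧ deriv z₂ 0 = 0 ∧ z₂ (ℓ ⟨1, by omega⟩) = 0 ∧ deriv z₂ (ℓ ⟨1, by omega⟩) = 0) :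
    let y : Fin N → ℝ → ℂ := fun i x =>
      if (i : ℕ) = 0 then iteratedDeriv 2 z₂ 0 * z₁ x
      else if (i : ℕ) = 1 then -(iteratedDeriv 2 z₁ 0) * z₂ x
      else 0
    iteratedDeriv 2 z₁ 0 ≠ 0 ∧ iteratedDeriv 2 z₂ 0 ≠ 0 ∧
    (∃ i, ∃ x ∈ Set.Icc (0:ℝ) (ℓ i), y i x ≠ 0) ∧
    (∀ i, ∃ mu : ℂ, ∀ x ∈ Set.Icc (0:ℝ) (ℓ i),
      mu * y i x + deriv (y i) x + iteratedDeriv 3 (y i) x = 0) ∧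
    (∀ i, y i 0 = 0 ∧ deriv (y i) 0 = 0 ∧ y i (ℓ i) = 0 ∧ deriv (y i) (ℓ i) = 0) ∧
    ∑ i, iteratedDeriv 2 (y i) 0 = 0 := by
  classical
  obtain ⟨hb10, hb11, hb12, hb13⟩ := hbc₁
  obtain ⟨hb20, hb21, hb22, hb23⟩ := hbc₂
  have hc1 : iteratedDeriv 2 z₁ 0 ≠ 0 := by
    intro h
    obtain ⟨x, hx, hxne⟩ := hz₁ne
    exact hxne (zero_of_ode _ lam₁ z₁ hz₁ hode₁ hb10 hb11 h x hx)
  have hc2 : iteratedDeriv 2 z₂ 0 ≠ 0 := by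
    intro h
    obtain ⟨x, hx, hxne⟩ := hz₂ne
    exact hxne (zero_of_ode _ lam₂ z₂ hz₂ hode₂ hb20 hb21 h x hx)
  intro y
  have hi0 : ((⟨0, by omega⟩ : Fin N) : ℕ) = 0 := rfl
  have hi1 : ((⟨1, by omega⟩ : Fin N) : ℕ) = 1 := rfl
  refine ⟨hc1, hc2, ?_, ?_, ?_, ?_⟩
  · obtain ⟨x, hx, hxne⟩ := hz₁ne
    refine ⟨⟨0, by omega⟩, x, hx, ?_⟩
    simp only [y, hi0, if_true]
    exact mul_ne_zero hc2 hxne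
  · intro i
    by_cases h0 : (i : ℕ) = 0
    · refine ⟨lam₁, ?_⟩
      intro x hx
      have hℓeq : ℓ i = ℓ ⟨0, by omega⟩ := by
        congr 1; exact Fin.ext h0
      rw [hℓeq] at hx
      have hy : y i = fun x => iteratedDeriv 2 z₂ 0 * z₁ x := by
        funext t; simp only [y]; rw [if_pos h0]
      rw [hy, deriv_const_mul_field, iteratedDeriv_cmul _ hz₁]
      have := hode₁ x hx
      linear_combination iteratedDeriv 2 z₂ 0 * this
    · by_cases h1 : (i : ℕ) = 1
      · refine ⟨lam₂, ?_⟩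
        intro x hx
        have hℓeq : ℓ i = ℓ ⟨1, by omega⟩ := by
          congr 1; exact Fin.ext h1
        rw [hℓeq] at hx
        have hy : y i = fun x => -(iteratedDeriv 2 z₁ 0) * z₂ x := by
          funext t; simp [y, h0, h1]
        rw [hy, deriv_const_mul_field, iteratedDeriv_cmul _ hz₂]
        have := hode₂ x hx
        linear_combination (-(iteratedDeriv 2 z₁ 0)) * this
      · refine ⟨0, ?_⟩
        intro x hx
        have hy : y i = fun _ => (0:ℂ) := by
          funext t; simp only [y]; rw [if_neg h0, if_neg h1]
        have hzf : (fun _ : ℝ => (0:ℂ)) = fun t => (0:ℂ) * z₁ t := by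
          funext t; simp
        rw [hy, hzf, deriv_const_mul_field, iteratedDeriv_cmul _ hz₁]
        simp
  · intro i
    by_cases h0 : (i : ℕ) = 0
    · have hy : y i = fun x => iteratedDeriv 2 z₂ 0 * z₁ x := by
        funext t; simp only [y]; rw [if_pos h0]
      have hℓeq : ℓ i = ℓ ⟨0, by omega⟩ := by congr 1; exact Fin.ext h0
      rw [hy, hℓeq]
      refine ⟨by simp [hb10], ?_, by simp [hb12], ?_⟩
      · rw [deriv_const_mul_field, hb11, mul_zero]
      · rw [deriv_const_mul_field, hb13, mul_zero]
    · by_cases h1 : (i : ℕ) = 1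
      · have hy : y i = fun x => -(iteratedDeriv 2 z₁ 0) * z₂ x := by
          funext t; simp only [y]; rw [if_neg h0, if_pos h1]
        have hℓeq : ℓ i = ℓ ⟨1, by omega⟩ := by congr 1; exact Fin.ext h1
        rw [hy, hℓeq]
        refine ⟨by simp [hb20], ?_, by simp [hb22], ?_⟩
        · rw [deriv_const_mul_field, hb21, mul_zero]
        · rw [deriv_const_mul_field, hb23, mul_zero]
      · have hy : y i = fun _ => (0:ℂ) := by
          funext t; simp only [y]; rw [if_neg h0, if_neg h1]
        rw [hy]
        refine ⟨rfl, by simp, rfl, by simp⟩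
  · set i0 : Fin N := ⟨0, by omega⟩
    set i1 : Fin N := ⟨1, by omega⟩
    have hne : i0 ≠ i1 := by
      intro h; exact absurd (congrArg Fin.val h) (by simp [i0, i1])
    have hsub : ({i0, i1} : Finset (Fin N)) ⊆ Finset.univ := Finset.subset_univ _
    have hzero : ∀ x ∈ Finset.univ, x ∉ ({i0, i1} : Finset (Fin N)) →
        iteratedDeriv 2 (y x) 0 = 0 := by
      intro x _ hx
      simp only [Finset.mem_insert, Finset.mem_singleton, not_or] at hx
      have h0 : (x : ℕ) ≠ 0 := fun h => hx.1 (Fin.ext h)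
      have h1 : (x : ℕ) ≠ 1 := fun h => hx.2 (Fin.ext h)
      have hy : y x = fun _ => (0:ℂ) := by
        funext t; simp only [y]; rw [if_neg h0, if_neg h1]
      have hzf : (fun _ : ℝ => (0:ℂ)) = fun t => (0:ℂ) * z₁ t := by
        funext t; simp
      rw [hy, hzf, iteratedDeriv_cmul (n := 2) (0:ℂ) (hz₁.of_le (by norm_num)), zero_mul]
    rw [← Finset.sum_subset hsub hzero, Finset.sum_pair hne]
    have hv0 : ((i0 : Fin N) : ℕ) = 0 := rfl
    have hv1 : ((i1 : Fin N) : ℕ) = 1 := rfl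
    have hy0 : y i0 = fun x => iteratedDeriv 2 z₂ 0 * z₁ x := by
      funext t; simp only [y, hv0]; norm_num
    have hy1 : y i1 = fun x => -(iteratedDeriv 2 z₁ 0) * z₂ x := by
      funext t; simp only [y, hv1]; norm_num
    rw [hy0, hy1, iteratedDeriv_cmul (n := 2) _ (hz₁.of_le (by norm_num)),
      iteratedDeriv_cmul (n := 2) _ (hz₂.of_le (by norm_num))]
    ring
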